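/- Let g be a complex reductive Lie algebra and x, y ∈ g. The following conditions are equivalent: (i) y lies in the center z(g^x) of the centralizer of x; (ii) g^x ⊆ g^y; (iii) [g, y] ⊆ [g, x]; (iv) z(g^y) ⊆ z(g^x). -/

import Mathlib

def IsReductiveLie (R L : Type*) [CommRing R] [LieRing L] [LieAlgebra R L] : Prop :=
  LieAlgebra.radical R L = LieAlgebra.center R L

/-- The centralizer `g^x` of `x`, as a subset. -/
def cent {L : Type*} [LieRing L] (x : L) : Set L := {z : L | ⁅z, x⁆ = 0}

/-- The center `z(g^x)` of the centralizer of `x`, as a subset. -/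
def zcent {L : Type*} [LieRing L] (x : L) : Set L :=
  {y : L | ⁅y, x⁆ = 0 ∧ ∀ z : L, ⁅z, x⁆ = 0 → ⁅y, z⁆ = 0}

/-- The linear map `a ↦ ⁅a, x⁆`. -/
def adR {L : Type*} [LieRing L] [LieAlgebra ℂ L] (x : L) : L →ₗ[ℂ] L where
  toFun a := ⁅a, x⁆
  map_add' a b := add_lie a b x
  map_smul' c a := smul_lie c a x

/-- for `x, y` in a complex reductive Lie algebra, the following are equivalent:
(i) `y ∈ z(g^x)`; (ii) `g^x ⊆ g^y`; (iii) `[g, y] ⊆ [g, x]`; (iv) `z(g^y) ⊆ z(g^x)`. -/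
theorem double_centralizer_equivalences
    {L : Type*} [LieRing L] [LieAlgebra ℂ L] [Module.Finite ℂ L]
    (hred : IsReductiveLie ℂ L)
    (κ : L →ₗ[ℂ] L →ₗ[ℂ] ℂ)
    (hnondeg : ∀ x : L, (∀ y : L, κ x y = 0) → x = 0)
    (hsymm : ∀ a b : L, κ a b = κ b a)
    (hinv : ∀ a b c : L, κ ⁅a, b⁆ c = κ a ⁅b, c⁆)
    (x y : L) :
    ((y ∈ zcent x) ↔ (cent x ⊆ cent y)) ∧
    ((cent x ⊆ cent y) ↔ (∀ a : L, ∃ b : L, ⁅a, y⁆ = ⁅b, x⁆)) ∧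
    ((∀ a : L, ∃ b : L, ⁅a, y⁆ = ⁅b, x⁆) ↔ (zcent y ⊆ zcent x)) := by
  have skew : ∀ a b : L, ⁅a, b⁆ = 0 → ⁅b, a⁆ = 0 := fun a b h =>
    neg_eq_zero.mp ((lie_skew a b).trans h)
  have hrefl : LinearMap.IsRefl κ := fun a b h => by rw [hsymm]; exact h
  have hnd : LinearMap.BilinForm.Nondegenerate κ :=
    hrefl.nondegenerate_iff_separatingLeft.mpr (fun a h => hnondeg a h)
  have hnondeg' : ∀ w : L, (∀ a : L, κ a w = 0) → w = 0 := by
    intro w h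
    exact hnondeg w (fun a => by rw [hsymm]; exact h a)
  -- (i) ↔ (ii)
  have h12 : (y ∈ zcent x) ↔ (cent x ⊆ cent y) := by
    constructor
    · rintro ⟨-, hy⟩ z hz
      exact skew y z (hy z hz)
    · intro h
      have hx : x ∈ cent x := lie_self x
      exact ⟨skew x y (h hx), fun z hz => skew z y (h hz)⟩
  -- the key orthogonality fact: range (adR x) = orthogonal (ker (adR x))
  have key : LinearMap.range (adR (L := L) x)
      = LinearMap.BilinForm.orthogonal κ (LinearMap.ker (adR (L := L) x)) := by
    have hsub : LinearMap.ker (adR (L := L) x)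
        ≤ LinearMap.BilinForm.orthogonal κ (LinearMap.range (adR (L := L) x)) := by
      rintro z hz _ ⟨b, rfl⟩
      have hz' : ⁅z, x⁆ = 0 := hz
      show κ (adR x b) z = 0
      show κ ⁅b, x⁆ z = 0
      rw [hinv, skew z x hz', map_zero]
    have hsup : LinearMap.BilinForm.orthogonal κ (LinearMap.range (adR (L := L) x))
        ≤ LinearMap.ker (adR (L := L) x) := by
      intro z hz
      have hz0 : ∀ b : L, κ ⁅b, x⁆ z = 0 := fun b => hz _ ⟨b, rfl⟩
      have hxz : ⁅x, z⁆ = 0 := by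
        apply hnondeg
        intro b
        rw [hsymm, ← hinv]
        exact hz0 b
      exact skew x z hxz
    have heq : LinearMap.ker (adR (L := L) x)
        = LinearMap.BilinForm.orthogonal κ (LinearMap.range (adR (L := L) x)) :=
      le_antisymm hsub hsup
    rw [heq, LinearMap.BilinForm.orthogonal_orthogonal hnd hrefl]
  -- (ii) ↔ (iii)
  have h23 : (cent x ⊆ cent y) ↔ (∀ a : L, ∃ b : L, ⁅a, y⁆ = ⁅b, x⁆) := by
    constructor
    · intro h a
      have hmem : ⁅a, y⁆
          ∈ LinearMap.BilinForm.orthogonal κ (LinearMap.ker (adR (L := L) x)) := by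
        intro z hz
        have hzc : z ∈ cent x := hz
        show κ z ⁅a, y⁆ = 0
        rw [hsymm, hinv, skew z y (h hzc), map_zero]
      rw [← key] at hmem
      obtain ⟨b, hb⟩ := hmem
      exact ⟨b, hb.symm⟩
    · intro h z hz
      have hzx : ⁅z, x⁆ = 0 := hz
      have hyz : ⁅y, z⁆ = 0 := by
        apply hnondeg'
        intro w
        obtain ⟨b, hb⟩ := h w
        rw [← hinv, hb, hinv, skew z x hzx, map_zero]
      exact skew y z hyz
  -- (iii) ↔ (iv)
  have h34 : (∀ a : L, ∃ b : L, ⁅a, y⁆ = ⁅b, x⁆) ↔ (zcent y ⊆ zcent x) := by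
    constructor
    · intro h
      have hxy : cent x ⊆ cent y := h23.mpr h
      rintro w ⟨hwy, hw⟩
      have hxcy : ⁅x, y⁆ = 0 := hxy (lie_self x)
      exact ⟨hw x hxcy, fun z hz => hw z (hxy hz)⟩
    · intro h
      have hyy : y ∈ zcent y := ⟨lie_self y, fun z hz => skew z y hz⟩
      exact h23.mp (h12.mp (h hyy))
  exact ⟨h12, h23, h34⟩
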